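/- Every simple 2-regular graph (i.e., every disjoint union of cycles) is antimagic. -/

import Mathlib

open Finset

/-- The vertex-sum of `v` under edge labeling `f`: the sum of labels on edges incident to `v`. -/
def vertexSum {V : Type*} [Fintype V] [DecidableEq V] (G : SimpleGraph V)
    [DecidableRel G.Adj] (f : Sym2 V → ℕ) (v : V) : ℕ :=
  ∑ e ∈ G.incidenceFinset v, f e

/-- A graph is antimagic if some bijective labeling of its edges by `{1, …, |E(G)|}`
has pairwise distinct vertex-sums. -/
def IsAntimagic {V : Type*} [Fintype V] [DecidableEq V] (G : SimpleGraph V)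
    [DecidableRel G.Adj] : Prop :=
  ∃ f : Sym2 V → ℕ,
    Set.BijOn f ↑G.edgeFinset ↑(Finset.Icc 1 G.edgeFinset.card) ∧
    ∀ u v : V, u ≠ v → vertexSum G f u ≠ vertexSum G f v


/-- label of edge `k` (0-indexed) in a cycle of length `L`, 1-indexed value. -/
def lab (L k : ℕ) : ℕ :=
  if L % 2 = 1 then k + 1
  else if k = L - 2 then L else if k = L - 1 then L - 1 else k + 1

/-- vertex-sum pattern at vertex `k` of the cycle (labels of edges k-1 (cyclically) and k). -/
def sig (L k : ℕ) : ℕ := lab L (if k = 0 then L - 1 else k - 1) + lab L k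

lemma lab_ge (L k : ℕ) (hL : 3 ≤ L) (hk : k < L) : 1 ≤ lab L k := by
  unfold lab; split_ifs <;> omega

lemma lab_le (L k : ℕ) (hL : 3 ≤ L) (hk : k < L) : lab L k ≤ L := by
  unfold lab; split_ifs <;> omega

lemma lab_inj (L : ℕ) (hL : 3 ≤ L) {k l : ℕ} (hk : k < L) (hl : l < L)
    (h : lab L k = lab L l) : k = l := by
  unfold lab at h; split_ifs at h <;> omega

lemma sig_ge (L k : ℕ) (hL : 3 ≤ L) (hk : k < L) : 3 ≤ sig L k := by
  unfold sig lab; split_ifs <;> omega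

lemma sig_le (L k : ℕ) (hL : 3 ≤ L) (hk : k < L) : sig L k ≤ 2 * L - 1 := by
  unfold sig lab; split_ifs <;> omega

lemma sig_inj (L : ℕ) (hL : 3 ≤ L) {k l : ℕ} (hk : k < L) (hl : l < L)
    (h : sig L k = sig L l) : k = l := by
  unfold sig lab at h; split_ifs at h <;> omega

lemma lab_surj (L : ℕ) (hL : 3 ≤ L) {y : ℕ} (h1 : 1 ≤ y) (h2 : y ≤ L) :
    ∃ k, k < L ∧ lab L k = y := by
  have himg : (Finset.range L).image (lab L) = Finset.Icc 1 L := by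
    apply Finset.eq_of_subset_of_card_le
    · intro x hx
      simp only [Finset.mem_image, Finset.mem_range] at hx
      obtain ⟨k, hk, rfl⟩ := hx
      exact Finset.mem_Icc.2 ⟨lab_ge L k hL hk, lab_le L k hL hk⟩
    · rw [Finset.card_image_of_injOn, Finset.card_range, Nat.card_Icc]
      · omega
      · intro a ha b hb hab
        exact lab_inj L hL (Finset.mem_range.1 ha) (Finset.mem_range.1 hb) hab
  have : y ∈ (Finset.range L).image (lab L) := himg ▸ Finset.mem_Icc.2 ⟨h1, h2⟩
  simp only [Finset.mem_image, Finset.mem_range] at this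
  obtain ⟨k, hk, hlk⟩ := this
  exact ⟨k, hk, hlk⟩

section Walk
variable {V : Type*} [Fintype V] [DecidableEq V] (G : SimpleGraph V) [DecidableRel G.Adj]

/-- the neighbor of `b` other than `a`. -/
noncomputable def nxt (a b : V) : V :=
  if h : ((G.neighborFinset b).erase a).Nonempty then h.choose else a

variable {G}

lemma nxt_mem (hreg : G.IsRegularOfDegree 2) {a b : V} (h : G.Adj a b) :
    nxt G a b ∈ (G.neighborFinset b).erase a := by
  have ha : a ∈ G.neighborFinset b := by
    rw [SimpleGraph.mem_neighborFinset]; exact h.symm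
  have hcard : ((G.neighborFinset b).erase a).card = 1 := by
    rw [Finset.card_erase_of_mem ha]
    have := hreg b
    rw [← SimpleGraph.card_neighborFinset_eq_degree] at this
    omega
  have hne : ((G.neighborFinset b).erase a).Nonempty := by
    rw [← Finset.card_pos, hcard]; omega
  rw [nxt, dif_pos hne]
  exact hne.choose_spec

lemma nxt_adj (hreg : G.IsRegularOfDegree 2) {a b : V} (h : G.Adj a b) :
    G.Adj b (nxt G a b) := by
  have := nxt_mem hreg h
  rw [Finset.mem_erase, SimpleGraph.mem_neighborFinset] at this
  exact this.2

lemma nxt_ne (hreg : G.IsRegularOfDegree 2) {a b : V} (h : G.Adj a b) :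
    nxt G a b ≠ a := by
  have := nxt_mem hreg h
  rw [Finset.mem_erase] at this
  exact this.1

lemma nxt_uniq (hreg : G.IsRegularOfDegree 2) {a b c : V} (h : G.Adj a b)
    (hc : G.Adj b c) (hca : c ≠ a) : c = nxt G a b := by
  have ha : a ∈ G.neighborFinset b := by
    rw [SimpleGraph.mem_neighborFinset]; exact h.symm
  have hcard : ((G.neighborFinset b).erase a).card = 1 := by
    rw [Finset.card_erase_of_mem ha]
    have := hreg b
    rw [← SimpleGraph.card_neighborFinset_eq_degree] at this
    omega
  obtain ⟨x, hx⟩ := Finset.card_eq_one.1 hcard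
  have h1 : c ∈ ((G.neighborFinset b).erase a) := by
    rw [Finset.mem_erase, SimpleGraph.mem_neighborFinset]; exact ⟨hca, hc⟩
  have h2 := nxt_mem hreg h
  rw [hx, Finset.mem_singleton] at h1 h2
  rw [h1, h2]

variable (G) in
/-- the walk starting at `v0` towards `u0`, always continuing to the other neighbor. -/
noncomputable def wlk (v0 u0 : V) : ℕ → V
  | 0 => v0
  | 1 => u0
  | (n+2) => nxt G (wlk v0 u0 n) (wlk v0 u0 (n+1))

variable (hreg : G.IsRegularOfDegree 2) {v0 u0 : V} (h0 : G.Adj v0 u0)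
include hreg h0

lemma wlk_adj (n : ℕ) : G.Adj (wlk G v0 u0 n) (wlk G v0 u0 (n+1)) := by
  induction n with
  | zero => exact h0
  | succ n ih =>
    rw [show n + 1 + 1 = n + 2 from rfl, wlk]
    exact nxt_adj hreg ih

lemma wlk_ne (n : ℕ) : wlk G v0 u0 (n+2) ≠ wlk G v0 u0 n := by
  rw [wlk]
  exact nxt_ne hreg (wlk_adj hreg h0 n)

lemma wlk_nbrs (n : ℕ) :
    G.neighborFinset (wlk G v0 u0 (n+1)) = {wlk G v0 u0 n, wlk G v0 u0 (n+2)} := by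
  have h1 : wlk G v0 u0 n ∈ G.neighborFinset (wlk G v0 u0 (n+1)) := by
    rw [SimpleGraph.mem_neighborFinset]; exact (wlk_adj hreg h0 n).symm
  have h2 : wlk G v0 u0 (n+2) ∈ G.neighborFinset (wlk G v0 u0 (n+1)) := by
    rw [SimpleGraph.mem_neighborFinset]; exact wlk_adj hreg h0 (n+1)
  have hne := wlk_ne hreg h0 n
  have hsub : ({wlk G v0 u0 n, wlk G v0 u0 (n+2)} : Finset V) ⊆
      G.neighborFinset (wlk G v0 u0 (n+1)) := by
    intro x hx
    rcases Finset.mem_insert.1 hx with rfl | hx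
    · exact h1
    · rw [Finset.mem_singleton] at hx; subst hx; exact h2
  refine (Finset.eq_of_subset_of_card_le hsub ?_).symm
  rw [Finset.card_pair (Ne.symm hne)]
  have := hreg (wlk G v0 u0 (n+1))
  rw [← SimpleGraph.card_neighborFinset_eq_degree] at this
  omega

lemma wlk_back {i j : ℕ} (h1 : wlk G v0 u0 (i+1) = wlk G v0 u0 (j+1))
    (h2 : wlk G v0 u0 (i+2) = wlk G v0 u0 (j+2)) : wlk G v0 u0 i = wlk G v0 u0 j := by
  have hi := wlk_nbrs hreg h0 i
  have hj := wlk_nbrs hreg h0 j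
  have hmem : wlk G v0 u0 i ∈ ({wlk G v0 u0 j, wlk G v0 u0 (j+2)} : Finset V) := by
    rw [← hj, ← h1, hi]
    exact Finset.mem_insert_self _ _
  rcases Finset.mem_insert.1 hmem with h | h
  · exact h
  · rw [Finset.mem_singleton] at h
    rw [← h2] at h
    exact absurd h.symm (wlk_ne hreg h0 i)

lemma wlk_back_iter : ∀ a b : ℕ, a ≤ b → wlk G v0 u0 a = wlk G v0 u0 b →
    wlk G v0 u0 (a+1) = wlk G v0 u0 (b+1) →
    wlk G v0 u0 0 = wlk G v0 u0 (b-a) ∧ wlk G v0 u0 1 = wlk G v0 u0 (b-a+1) := by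
  intro a
  induction a with
  | zero => intro b _ h1 h2; exact ⟨h1, h2⟩
  | succ a ih =>
    intro b hab h1 h2
    obtain ⟨c, rfl⟩ : ∃ c, b = c + 1 := ⟨b - 1, by omega⟩
    have hac : a ≤ c := by omega
    have h0' : wlk G v0 u0 a = wlk G v0 u0 c := wlk_back hreg h0 h1 h2
    have := ih c hac h0' h1
    simpa [Nat.succ_sub_succ] using this

lemma wlk_exists_period : ∃ t, 0 < t ∧ wlk G v0 u0 t = v0 ∧ wlk G v0 u0 (t+1) = u0 := by
  classical
  have hmap : ∀ a ∈ Finset.range (Fintype.card (V × V) + 1),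
      (wlk G v0 u0 a, wlk G v0 u0 (a+1)) ∈ (Finset.univ : Finset (V × V)) := by
    intro a _; exact Finset.mem_univ _
  obtain ⟨i, hi, j, hj, hij, heq⟩ :=
    Finset.exists_ne_map_eq_of_card_lt_of_maps_to
      (by simp) hmap
  wlog hlt : i < j generalizing i j
  · exact this j hj i hi hij.symm heq.symm (by omega)
  have h1 : wlk G v0 u0 i = wlk G v0 u0 j := congrArg Prod.fst heq
  have h2 : wlk G v0 u0 (i+1) = wlk G v0 u0 (j+1) := congrArg Prod.snd heq
  obtain ⟨e1, e2⟩ := wlk_back_iter hreg h0 i j (by omega) h1 h2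
  exact ⟨j - i, by omega, by rw [← e1]; rfl, by rw [← e2]; rfl⟩

variable {L : ℕ} (hL0 : wlk G v0 u0 L = v0) (hL1 : wlk G v0 u0 (L+1) = u0)
include hL0 hL1

lemma wlk_per (t : ℕ) : wlk G v0 u0 (t + L) = wlk G v0 u0 t := by
  have key : ∀ t, wlk G v0 u0 (t + L) = wlk G v0 u0 t ∧
      wlk G v0 u0 (t + 1 + L) = wlk G v0 u0 (t + 1) := by
    intro t
    induction t with
    | zero =>
      constructor
      · rw [Nat.zero_add, hL0]; rfl
      · rw [show 0 + 1 + L = L + 1 by omega, hL1]; rfl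
    | succ t ih =>
      refine ⟨ih.2, ?_⟩
      have e1 : t + 1 + 1 + L = (t + L) + 2 := by omega
      have e2 : t + 1 + 1 = t + 2 := rfl
      rw [e1, e2, wlk, wlk]
      rw [ih.1, show t + L + 1 = t + 1 + L by omega, ih.2]
  exact (key t).1

lemma wlk_p_inj (hmin : ∀ t, 0 < t → t < L → ¬(wlk G v0 u0 t = v0 ∧ wlk G v0 u0 (t+1) = u0))
    {a b : ℕ} (hab : a < b) (hbL : b < L)
    (e1 : wlk G v0 u0 a = wlk G v0 u0 b) (e2 : wlk G v0 u0 (a+1) = wlk G v0 u0 (b+1)) :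
    False := by
  obtain ⟨f1, f2⟩ := wlk_back_iter hreg h0 a b (by omega) e1 e2
  exact hmin (b - a) (by omega) (by omega) ⟨f1.symm, f2.symm⟩

lemma wlk_inj (hL3 : 3 ≤ L)
    (hmin : ∀ t, 0 < t → t < L → ¬(wlk G v0 u0 t = v0 ∧ wlk G v0 u0 (t+1) = u0)) :
    ∀ i j, i < j → j < L → wlk G v0 u0 i ≠ wlk G v0 u0 j := by
  classical
  by_contra hcon
  push_neg at hcon
  obtain ⟨i0, j0, hij0, hj0L, heq0⟩ := hcon
  have hex : ∃ j, j < L ∧ ∃ i, i < j ∧ wlk G v0 u0 i = wlk G v0 u0 j :=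
    ⟨j0, hj0L, i0, hij0, heq0⟩
  obtain ⟨hjL, i, hij, heq⟩ := Nat.find_spec hex
  set j := Nat.find hex with hjdef
  have hminj : ∀ j', j' < j → ¬(j' < L ∧ ∃ i', i' < j' ∧ wlk G v0 u0 i' = wlk G v0 u0 j') :=
    fun j' h => Nat.find_min hex h
  have hadjne : ∀ n, wlk G v0 u0 n ≠ wlk G v0 u0 (n+1) :=
    fun n => (wlk_adj hreg h0 n).ne
  -- w (j+1) and (for j ≥ 1) w (j-1) are neighbors of w j
  have hj1mem : wlk G v0 u0 (j+1) ∈ G.neighborFinset (wlk G v0 u0 j) := by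
    rw [SimpleGraph.mem_neighborFinset]; exact wlk_adj hreg h0 j
  rcases Nat.eq_zero_or_pos i with rfl | hipos
  · -- i = 0
    have hw0 : wlk G v0 u0 L = wlk G v0 u0 0 := hL0
    have hnb0 : G.neighborFinset (wlk G v0 u0 0) = {wlk G v0 u0 (L-1), wlk G v0 u0 1} := by
      have h := wlk_nbrs hreg h0 (L-1)
      rw [show L - 1 + 1 = L by omega, show L - 1 + 2 = L + 1 by omega, hw0] at h
      rw [h, hL1]; rfl
    have hne1L : wlk G v0 u0 1 ≠ wlk G v0 u0 (L-1) := by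
      have := wlk_ne hreg h0 (L-1)
      rw [show L - 1 + 2 = L + 1 by omega, hL1] at this
      exact this
    have hjpos : 0 < j := hij
    have hnbj : G.neighborFinset (wlk G v0 u0 j) = {wlk G v0 u0 (L-1), wlk G v0 u0 1} := by
      rw [← heq, hnb0]
    rw [hnbj] at hj1mem
    rcases Finset.mem_insert.1 hj1mem with hc | hc
    · -- w (j+1) = w (L-1)
      have hj1 : j ≠ 1 := by
        intro h; rw [h] at heq; exact hadjne 0 heq
      have hj2 : 2 ≤ j := by omega
      have hjm1 : wlk G v0 u0 (j-1) ∈ G.neighborFinset (wlk G v0 u0 j) := by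
        rw [SimpleGraph.mem_neighborFinset]
        have := wlk_adj hreg h0 (j-1)
        rw [show j - 1 + 1 = j by omega] at this
        exact this.symm
      rw [hnbj] at hjm1
      have hne2 : wlk G v0 u0 (j-1) ≠ wlk G v0 u0 (L-1) := by
        rw [← hc]
        intro h
        have := wlk_ne hreg h0 (j-1)
        rw [show j - 1 + 2 = j + 1 by omega] at this
        exact this h.symm
      rcases Finset.mem_insert.1 hjm1 with hd | hd
      · exact hne2 hd
      · rw [Finset.mem_singleton] at hd
        rcases eq_or_lt_of_le (show 1 ≤ j - 1 by omega) with he | he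
        · have hj2' : j = 2 := by omega
          rw [hj2'] at heq
          exact wlk_ne hreg h0 0 heq.symm
        · exact hminj (j-1) (by omega) ⟨by omega, 1, he, hd.symm⟩
    · -- w (j+1) = w 1
      rw [Finset.mem_singleton] at hc
      exact wlk_p_inj hreg h0 hL0 hL1 hmin hjpos hjL heq hc.symm
  · -- i ≥ 1
    have hnbi : G.neighborFinset (wlk G v0 u0 i) = {wlk G v0 u0 (i-1), wlk G v0 u0 (i+1)} := by
      have h := wlk_nbrs hreg h0 (i-1)
      rw [show i - 1 + 1 = i by omega, show i - 1 + 2 = i + 1 by omega] at h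
      exact h
    have hnbj : G.neighborFinset (wlk G v0 u0 j) = {wlk G v0 u0 (i-1), wlk G v0 u0 (i+1)} := by
      rw [← heq, hnbi]
    rw [hnbj] at hj1mem
    rcases Finset.mem_insert.1 hj1mem with hc | hc
    · -- w (j+1) = w (i-1)
      have hji1 : j ≠ i + 1 := by
        intro h; rw [h] at heq; exact hadjne i heq
      have hj2 : i + 2 ≤ j := by omega
      have hjm1 : wlk G v0 u0 (j-1) ∈ G.neighborFinset (wlk G v0 u0 j) := by
        rw [SimpleGraph.mem_neighborFinset]
        have := wlk_adj hreg h0 (j-1)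
        rw [show j - 1 + 1 = j by omega] at this
        exact this.symm
      rw [hnbj] at hjm1
      have hne2 : wlk G v0 u0 (j-1) ≠ wlk G v0 u0 (i-1) := by
        rw [← hc]
        intro h
        have := wlk_ne hreg h0 (j-1)
        rw [show j - 1 + 2 = j + 1 by omega] at this
        exact this h.symm
      rcases Finset.mem_insert.1 hjm1 with hd | hd
      · exact hne2 hd
      · rw [Finset.mem_singleton] at hd
        rcases eq_or_lt_of_le (show i + 1 ≤ j - 1 by omega) with he | he
        · have hj2' : j = i + 2 := by omega
          rw [hj2'] at heq
          exact wlk_ne hreg h0 i heq.symm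
        · exact hminj (j-1) (by omega) ⟨by omega, i+1, he, hd.symm⟩
    · -- w (j+1) = w (i+1)
      rw [Finset.mem_singleton] at hc
      exact wlk_p_inj hreg h0 hL0 hL1 hmin hij hjL heq hc.symm

end Walk

section Helpers
variable {V : Type*} [Fintype V] [DecidableEq V] (G : SimpleGraph V) [DecidableRel G.Adj]

lemma incidenceFinset_eq_image (v : V) :
    G.incidenceFinset v = (G.neighborFinset v).image (fun u => s(v,u)) := by
  ext e
  induction e
  rename_i a b
  simp only [SimpleGraph.mem_incidenceFinset, Finset.mem_image,
    SimpleGraph.mem_neighborFinset, SimpleGraph.mk'_mem_incidenceSet_iff]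
  constructor
  · rintro ⟨hab, rfl | rfl⟩
    · exact ⟨b, hab, rfl⟩
    · exact ⟨a, hab.symm, Sym2.eq_swap⟩
  · rintro ⟨u, hu, h⟩
    rw [Sym2.eq_iff] at h
    rcases h with ⟨rfl, rfl⟩ | ⟨rfl, rfl⟩
    · exact ⟨hu, Or.inl rfl⟩
    · exact ⟨hu.symm, Or.inr rfl⟩

lemma vertexSum_eq (f : Sym2 V → ℕ) (v : V) :
    vertexSum G f v = ∑ u ∈ G.neighborFinset v, f s(v,u) := by
  rw [vertexSum, incidenceFinset_eq_image, Finset.sum_image]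
  intro a _ b _ hab
  rw [Sym2.eq_iff] at hab
  rcases hab with ⟨_, h⟩ | ⟨h1, h2⟩
  · exact h
  · rw [← h1, h2]

lemma two_regular_card_edges (hreg : G.IsRegularOfDegree 2) :
    G.edgeFinset.card = Fintype.card V := by
  have h := G.sum_degrees_eq_twice_card_edges
  have h2 : ∑ v : V, G.degree v = 2 * Fintype.card V := by
    rw [Finset.sum_congr rfl (fun v _ => hreg v), Finset.sum_const, Finset.card_univ,
      smul_eq_mul, mul_comm]
  omega

end Helpers

universe u

lemma empty_case {V : Type u} [Fintype V] [DecidableEq V] (G : SimpleGraph V)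
    [DecidableRel G.Adj] (hreg : G.IsRegularOfDegree 2) (hcard : Fintype.card V = 0)
    (s : ℕ) :
    ∃ f : Sym2 V → ℕ,
      Set.BijOn f ↑G.edgeFinset ↑(Finset.Icc (s+1) (s + Fintype.card V)) ∧
      (∀ v : V, vertexSum G f v ∈ Finset.Icc (2*s+3) (2*s + 2 * Fintype.card V - 1)) ∧
      (∀ u v : V, u ≠ v → vertexSum G f u ≠ vertexSum G f v) := by
  have hE : G.edgeFinset = ∅ := by
    have := two_regular_card_edges G hreg
    rw [hcard] at this
    exact Finset.card_eq_zero.1 this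
  have hVempty : IsEmpty V := Fintype.card_eq_zero_iff.1 hcard
  refine ⟨fun _ => 0, ?_, fun v => (hVempty.false v).elim, fun u => (hVempty.false u).elim⟩
  rw [hE, hcard, Finset.Icc_eq_empty (by omega)]
  simp

lemma main (n : ℕ) : ∀ (V : Type u) [Fintype V] [DecidableEq V]
    (G : SimpleGraph V) [DecidableRel G.Adj],
    Fintype.card V ≤ n → G.IsRegularOfDegree 2 → ∀ s : ℕ,
    ∃ f : Sym2 V → ℕ,
      Set.BijOn f ↑G.edgeFinset ↑(Finset.Icc (s+1) (s + Fintype.card V)) ∧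
      (∀ v : V, vertexSum G f v ∈ Finset.Icc (2*s+3) (2*s + 2 * Fintype.card V - 1)) ∧
      (∀ u v : V, u ≠ v → vertexSum G f u ≠ vertexSum G f v) := by
  induction n with
  | zero =>
    intro V _ _ G _ hcard hreg s
    exact empty_case G hreg (by omega) s
  | succ n ih =>
    intro V _ _ G _ hcard hreg s
    classical
    rcases Nat.eq_zero_or_pos (Fintype.card V) with hV0 | hVpos
    · exact empty_case G hreg hV0 s
    have hne : Nonempty V := Fintype.card_pos_iff.1 hVpos
    obtain ⟨v0⟩ := hne
    have hdeg : (G.neighborFinset v0).card = 2 := by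
      rw [SimpleGraph.card_neighborFinset_eq_degree]; exact hreg v0
    have hnbne : (G.neighborFinset v0).Nonempty := by rw [← Finset.card_pos, hdeg]; omega
    obtain ⟨u0, hu0⟩ := hnbne
    have h0 : G.Adj v0 u0 := (SimpleGraph.mem_neighborFinset _ _ _).1 hu0
    set w := wlk G v0 u0 with hw
    have hw0 : w 0 = v0 := rfl
    have hw1 : w 1 = u0 := rfl
    have hex := wlk_exists_period hreg h0
    set L := Nat.find hex with hLdef
    obtain ⟨hLpos, hL0, hL1⟩ := Nat.find_spec hex
    rw [← hLdef, ← hw] at hL0 hL1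
    rw [← hLdef] at hLpos
    have hmin : ∀ t, 0 < t → t < L → ¬(w t = v0 ∧ w (t+1) = u0) := by
      intro t ht htL hpair
      exact Nat.find_min hex htL ⟨ht, hpair⟩
    have hL3 : 3 ≤ L := by
      rcases (show L = 1 ∨ L = 2 ∨ 3 ≤ L by omega) with h | h | h
      · exfalso; rw [h] at hL0; rw [← hw1, hL0] at h0; exact G.irrefl h0
      · exfalso; rw [h] at hL0
        have h2 := wlk_ne hreg h0 0
        rw [← hw] at h2
        exact h2 (hL0.trans hw0.symm)
      · exact h
    have hper : ∀ t, w (t + L) = w t := by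
      rw [hw]
      exact wlk_per hreg h0 hL0 hL1
    have hinj : ∀ i j, i < j → j < L → w i ≠ w j := by
      rw [hw]
      exact wlk_inj hreg h0 hL0 hL1 hL3 hmin
    have hwL : w L = w 0 := by rw [hL0, hw0]
    -- cycle vertex set
    set C : Finset V := (Finset.range L).image w with hC
    have hCcard : C.card = L := by
      rw [hC, Finset.card_image_of_injOn, Finset.card_range]
      intro a ha b hb hab
      simp only [Finset.mem_coe, Finset.mem_range] at ha hb
      by_contra hne'
      rcases Nat.lt_or_ge a b with h | h
      · exact hinj a b h hb hab
      · exact hinj b a (by omega) ha hab.symm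
    have hmemC : ∀ k, k < L → w k ∈ C := by
      intro k hk
      exact Finset.mem_image.2 ⟨k, Finset.mem_range.2 hk, rfl⟩
    -- neighbor structure
    have hnb : ∀ k, 1 ≤ k → G.neighborFinset (w k) = {w (k-1), w (k+1)} := by
      intro k hk
      have h := wlk_nbrs hreg h0 (k-1)
      rw [← hw, show k - 1 + 1 = k by omega, show k - 1 + 2 = k + 1 by omega] at h
      exact h
    have hnb0 : G.neighborFinset (w 0) = {w (L-1), w 1} := by
      have h := hnb L (by omega)
      rw [hwL, show L + 1 = 1 + L by omega, hper 1] at h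
      exact h
    have hne1L : w 1 ≠ w (L-1) := by
      have := wlk_ne hreg h0 (L-1)
      rw [← hw, show L - 1 + 2 = L + 1 by omega, show L + 1 = 1 + L by omega, hper 1] at this
      exact this
    have hclosed : ∀ a ∈ C, ∀ b, G.Adj a b → b ∈ C := by
      intro a ha b hab
      obtain ⟨k, hk, rfl⟩ : ∃ k, k < L ∧ w k = a := by
        obtain ⟨k, hk, hka⟩ := Finset.mem_image.1 ha
        exact ⟨k, Finset.mem_range.1 hk, hka⟩
      have hbmem : b ∈ G.neighborFinset (w k) := by
        rw [SimpleGraph.mem_neighborFinset]; exact hab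
      rcases Nat.eq_zero_or_pos k with rfl | hkpos
      · rw [hnb0] at hbmem
        rcases Finset.mem_insert.1 hbmem with rfl | hb
        · exact hmemC (L-1) (by omega)
        · rw [Finset.mem_singleton] at hb; subst hb; exact hmemC 1 (by omega)
      · rw [hnb k hkpos] at hbmem
        rcases Finset.mem_insert.1 hbmem with rfl | hb
        · exact hmemC (k-1) (by omega)
        · rw [Finset.mem_singleton] at hb; subst hb
          rcases Nat.lt_or_ge (k+1) L with h | h
          · exact hmemC (k+1) h
          · have : k + 1 = L := by omega
            rw [this, hwL]; exact hmemC 0 (by omega)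
    -- cycle edges
    set E : ℕ → Sym2 V := fun k => s(w k, w (k+1)) with hE
    have hEmem : ∀ k, E k ∈ G.edgeFinset := by
      intro k
      rw [SimpleGraph.mem_edgeFinset]
      have h := wlk_adj hreg h0 k
      rw [← hw] at h
      exact h
    have hEuniq : ∀ k l, k < L → l < L → E k = E l → k = l := by
      intro k l hk hl h
      simp only [hE, Sym2.eq_iff] at h
      rcases h with ⟨h1, _⟩ | ⟨h1, h2⟩
      · by_contra hne'
        rcases Nat.lt_or_ge k l with hlt | hge
        · exact hinj k l hlt hl h1
        · exact hinj l k (by omega) hk h1.symm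
      · rcases Nat.lt_or_ge (l+1) L with hl1 | hl1
        · have hkeq : k = l + 1 := by
            by_contra hne'
            rcases Nat.lt_or_ge k (l+1) with hlt | hge
            · exact hinj k (l+1) hlt hl1 h1
            · exact hinj (l+1) k (by omega) hk h1.symm
          exfalso
          subst hkeq
          have h3 := wlk_ne hreg h0 l
          rw [← hw] at h3
          exact h3 h2
        · have hlL : l = L - 1 := by omega
          subst hlL
          rw [show L - 1 + 1 = L by omega, hwL] at h1
          have hk0 : k = 0 := by
            by_contra hne'
            exact hinj 0 k (by omega) hk h1.symm
          exfalso
          subst hk0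
          exact hne1L h2
    -- the complement subtype and induced graph
    set Vc := {x : V // x ∉ C} with hVc
    set G' : SimpleGraph Vc := G.comap Subtype.val with hG'
    haveI : DecidableRel G'.Adj := fun a b => ‹DecidableRel G.Adj› a.val b.val
    have houtside : ∀ (a : V), a ∉ C → ∀ b, G.Adj a b → b ∉ C := by
      intro a ha b hab hb
      exact ha (hclosed b hb a hab.symm)
    have himg : ∀ x : Vc, (G'.neighborFinset x).image Subtype.val = G.neighborFinset x.val := by
      intro x
      ext u
      simp only [Finset.mem_image, SimpleGraph.mem_neighborFinset]
      constructor
      · rintro ⟨y, hy, rfl⟩; exact hy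
      · intro hu
        have hu' : u ∉ C := houtside x.val x.2 u hu
        exact ⟨⟨u, hu'⟩, hu, rfl⟩
    have hreg' : G'.IsRegularOfDegree 2 := by
      intro x
      show G'.degree x = 2
      rw [← SimpleGraph.card_neighborFinset_eq_degree, ← Finset.card_image_of_injective
        (G'.neighborFinset x) Subtype.val_injective, himg x,
        SimpleGraph.card_neighborFinset_eq_degree]
      exact hreg x.val
    set m := Fintype.card V with hm
    have hedge : G.edgeFinset.card = m := two_regular_card_edges G hreg
    have hLm : L ≤ m := by
      rw [← hCcard, hm, ← Finset.card_univ]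
      exact Finset.card_le_univ C
    have hcardVc : Fintype.card Vc = m - L := by
      have h1 : Fintype.card Vc = (Finset.univ.filter (fun x => x ∉ C)).card :=
        Fintype.card_subtype _
      have h2 : (Finset.univ.filter (fun x : V => x ∈ C)) = C := by
        ext x; simp
      have h3 := Finset.card_filter_add_card_filter_not
        (s := (Finset.univ : Finset V)) (p := fun x : V => x ∈ C)
      rw [h2] at h3
      rw [h1]
      have h4 : (Finset.univ : Finset V).card = m := Finset.card_univ
      omega
    have hcard' : Fintype.card Vc ≤ n := by rw [hcardVc]; omega
    obtain ⟨f', hbij', hmem', hdist'⟩ := ih Vc G' hcard' hreg' (s + L)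
    rw [hcardVc] at hbij' hmem'
    rw [show s + L + (m - L) = s + m by omega] at hbij'
    -- lifted edges
    have hliftedge : ∀ e' ∈ G'.edgeFinset, Sym2.map Subtype.val e' ∈ G.edgeFinset := by
      intro e' he'
      induction e' using Sym2.ind with
      | _ a b =>
        rw [SimpleGraph.mem_edgeFinset, SimpleGraph.mem_edgeSet] at he'
        rw [Sym2.map_pair_eq, SimpleGraph.mem_edgeFinset, SimpleGraph.mem_edgeSet]
        exact he'
    -- the labeling
    set f : Sym2 V → ℕ := fun e =>
      if h : ∃ k, k < L ∧ e = E k then s + lab L (Nat.find h)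
      else if h2 : ∃ e', Sym2.map (Subtype.val : Vc → V) e' = e then f' h2.choose
      else 0 with hf
    have hfE : ∀ k, k < L → f (E k) = s + lab L k := by
      intro k hk
      have hh : ∃ k', k' < L ∧ E k = E k' := ⟨k, hk, rfl⟩
      simp only [hf]
      rw [dif_pos hh]
      have hspec := Nat.find_spec hh
      have heq := hEuniq (Nat.find hh) k hspec.1 hk hspec.2.symm
      rw [heq]
    have hEnotlift : ∀ (e' : Sym2 Vc) k, k < L → Sym2.map Subtype.val e' ≠ E k := by
      intro e' k hk hcontra
      have hmm : w k ∈ Sym2.map Subtype.val e' := by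
        rw [hcontra]
        simp only [hE]
        exact Sym2.mem_mk_left _ _
      rw [Sym2.mem_map] at hmm
      obtain ⟨a, _, ha⟩ := hmm
      exact a.2 (ha ▸ hmemC k hk)
    have hflift : ∀ e' : Sym2 Vc, f (Sym2.map Subtype.val e') = f' e' := by
      intro e'
      have hnot : ¬ ∃ k, k < L ∧ Sym2.map Subtype.val e' = E k := by
        rintro ⟨k, hk, hkk⟩; exact hEnotlift e' k hk hkk
      have hyes : ∃ e'', Sym2.map (Subtype.val : Vc → V) e'' = Sym2.map Subtype.val e' := ⟨e', rfl⟩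
      simp only [hf]
      rw [dif_neg hnot, dif_pos hyes]
      congr 1
      exact Sym2.map.injective Subtype.val_injective hyes.choose_spec
    -- splitting the edges
    have hsplit : ∀ e ∈ G.edgeFinset, (∃ k, k < L ∧ e = E k) ∨
        (∃ e' ∈ G'.edgeFinset, Sym2.map (Subtype.val : Vc → V) e' = e) := by
      intro e he
      revert he
      induction e using Sym2.ind with
      | _ a b =>
        intro he
        rw [SimpleGraph.mem_edgeFinset, SimpleGraph.mem_edgeSet] at he
        by_cases haC : a ∈ C
        · left
          obtain ⟨k, hk, rfl⟩ : ∃ k, k < L ∧ w k = a := by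
            obtain ⟨k, hk, hka⟩ := Finset.mem_image.1 haC
            exact ⟨k, Finset.mem_range.1 hk, hka⟩
          have hbmem : b ∈ G.neighborFinset (w k) := by
            rw [SimpleGraph.mem_neighborFinset]; exact he
          rcases Nat.eq_zero_or_pos k with rfl | hkpos
          · rw [hnb0] at hbmem
            rcases Finset.mem_insert.1 hbmem with rfl | hb
            · refine ⟨L-1, by omega, ?_⟩
              simp only [hE]
              rw [show L - 1 + 1 = L by omega, hwL]
              exact Sym2.eq_swap
            · rw [Finset.mem_singleton] at hb; subst hb
              exact ⟨0, by omega, rfl⟩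
          · rw [hnb k hkpos] at hbmem
            rcases Finset.mem_insert.1 hbmem with rfl | hb
            · refine ⟨k-1, by omega, ?_⟩
              simp only [hE]
              rw [show k - 1 + 1 = k by omega]
              exact Sym2.eq_swap
            · rw [Finset.mem_singleton] at hb; subst hb
              exact ⟨k, hk, rfl⟩
        · right
          have hbC : b ∉ C := houtside a haC b he
          refine ⟨s(⟨a, haC⟩, ⟨b, hbC⟩), ?_, ?_⟩
          · rw [SimpleGraph.mem_edgeFinset, SimpleGraph.mem_edgeSet]
            exact he
          · rw [Sym2.map_pair_eq]
    -- vertex sums on the cycle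
    have hsumcyc : ∀ k, k < L → vertexSum G f (w k) = 2*s + sig L k := by
      intro k hk
      rcases Nat.eq_zero_or_pos k with rfl | hkpos
      · rw [vertexSum_eq, hnb0, Finset.sum_pair hne1L.symm]
        have e1 : s(w 0, w (L-1)) = E (L-1) := by
          simp only [hE]
          rw [show L - 1 + 1 = L by omega, hwL]
          exact Sym2.eq_swap
        have e2 : s(w 0, w 1) = E 0 := rfl
        rw [e1, e2, hfE (L-1) (by omega), hfE 0 (by omega)]
        unfold sig
        rw [if_pos rfl]
        ring
      · have hdiff : w (k-1) ≠ w (k+1) := by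
          have h := wlk_ne hreg h0 (k-1)
          rw [← hw, show k - 1 + 2 = k + 1 by omega] at h
          exact fun hcontra => h hcontra.symm
        rw [vertexSum_eq, hnb k hkpos, Finset.sum_pair hdiff]
        have e1 : s(w k, w (k-1)) = E (k-1) := by
          simp only [hE]
          rw [show k - 1 + 1 = k by omega]
          exact Sym2.eq_swap
        have e2 : s(w k, w (k+1)) = E k := rfl
        rw [e1, e2, hfE (k-1) (by omega), hfE k hk]
        unfold sig
        rw [if_neg (by omega)]
        ring
    -- vertex sums outside the cycle
    have hsumout : ∀ (v : V) (hv : v ∉ C), vertexSum G f v = vertexSum G' f' ⟨v, hv⟩ := by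
      intro v hv
      rw [vertexSum_eq, vertexSum_eq, ← himg ⟨v, hv⟩,
        Finset.sum_image (fun a _ b _ h => Subtype.val_injective h)]
      apply Finset.sum_congr rfl
      intro x _
      have hxx : s(v, x.val) = Sym2.map (Subtype.val : Vc → V) s((⟨v, hv⟩ : Vc), x) := by
        rw [Sym2.map_pair_eq]
      rw [hxx, hflift]
    have hCk : ∀ v ∈ C, ∃ k, k < L ∧ w k = v := by
      intro v hv
      obtain ⟨k, hk, hka⟩ := Finset.mem_image.1 hv
      exact ⟨k, Finset.mem_range.1 hk, hka⟩
    refine ⟨f, ⟨?_, ?_, ?_⟩, ?_, ?_⟩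
    · -- MapsTo
      intro e he
      rw [Finset.mem_coe] at he
      rw [Finset.mem_coe, Finset.mem_Icc]
      rcases hsplit e he with ⟨k, hk, rfl⟩ | ⟨e', he', rfl⟩
      · rw [hfE k hk]
        have := lab_ge L k hL3 hk
        have := lab_le L k hL3 hk
        omega
      · rw [hflift]
        have := hbij'.mapsTo (Finset.mem_coe.2 he')
        rw [Finset.mem_coe, Finset.mem_Icc] at this
        omega
    · -- InjOn
      intro e1 he1 e2 he2 hfe
      rw [Finset.mem_coe] at he1 he2
      rcases hsplit e1 he1 with ⟨k, hk, rfl⟩ | ⟨e1', he1', rfl⟩ <;>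
        rcases hsplit e2 he2 with ⟨l, hl, rfl⟩ | ⟨e2', he2', rfl⟩
      · rw [hfE k hk, hfE l hl] at hfe
        have hkl : k = l := lab_inj L hL3 hk hl (by omega)
        rw [hkl]
      · exfalso
        rw [hfE k hk, hflift] at hfe
        have h1 := lab_le L k hL3 hk
        have h2 := hbij'.mapsTo (Finset.mem_coe.2 he2')
        rw [Finset.mem_coe, Finset.mem_Icc] at h2
        omega
      · exfalso
        rw [hfE l hl, hflift] at hfe
        have h1 := lab_le L l hL3 hl
        have h2 := hbij'.mapsTo (Finset.mem_coe.2 he1')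
        rw [Finset.mem_coe, Finset.mem_Icc] at h2
        omega
      · rw [hflift, hflift] at hfe
        rw [hbij'.injOn (Finset.mem_coe.2 he1') (Finset.mem_coe.2 he2') hfe]
    · -- SurjOn
      intro y hy
      rw [Finset.mem_coe, Finset.mem_Icc] at hy
      rcases le_or_gt y (s + L) with hyL | hyL
      · obtain ⟨k, hk, hlk⟩ := lab_surj L hL3 (show 1 ≤ y - s by omega) (show y - s ≤ L by omega)
        refine ⟨E k, Finset.mem_coe.2 (hEmem k), ?_⟩
        rw [hfE k hk, hlk]
        omega
      · have hy2 : y ∈ (Finset.Icc (s + L + 1) (s + m) : Set ℕ) := by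
          simp only [Finset.coe_Icc, Set.mem_Icc]; omega
        obtain ⟨e', he', hfe'⟩ := hbij'.surjOn hy2
        rw [Finset.mem_coe] at he'
        exact ⟨Sym2.map Subtype.val e', Finset.mem_coe.2 (hliftedge e' he'),
          by rw [hflift]; exact hfe'⟩
    · -- sums in range
      intro v
      by_cases hv : v ∈ C
      · obtain ⟨k, hk, rfl⟩ := hCk v hv
        rw [hsumcyc k hk, Finset.mem_Icc]
        have := sig_ge L k hL3 hk
        have := sig_le L k hL3 hk
        omega
      · rw [hsumout v hv, Finset.mem_Icc]
        have := hmem' ⟨v, hv⟩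
        rw [Finset.mem_Icc] at this
        omega
    · -- distinct sums
      intro u v huv
      by_cases hu : u ∈ C <;> by_cases hv : v ∈ C
      · obtain ⟨k, hk, rfl⟩ := hCk u hu
        obtain ⟨l, hl, rfl⟩ := hCk v hv
        rw [hsumcyc k hk, hsumcyc l hl]
        intro hcontra
        exact huv (by rw [sig_inj L hL3 hk hl (by omega)])
      · obtain ⟨k, hk, rfl⟩ := hCk u hu
        rw [hsumcyc k hk, hsumout v hv]
        have h1 := sig_le L k hL3 hk
        have h2 := hmem' ⟨v, hv⟩
        rw [Finset.mem_Icc] at h2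
        omega
      · obtain ⟨l, hl, rfl⟩ := hCk v hv
        rw [hsumcyc l hl, hsumout u hu]
        have h1 := sig_le L l hL3 hl
        have h2 := hmem' ⟨u, hu⟩
        rw [Finset.mem_Icc] at h2
        omega
      · rw [hsumout u hu, hsumout v hv]
        exact hdist' ⟨u, hu⟩ ⟨v, hv⟩ (fun hcontra => huv (congrArg Subtype.val hcontra))

theorem stmt_7 {V : Type*} [Fintype V] [DecidableEq V] (G : SimpleGraph V)
    [DecidableRel G.Adj] (hreg : G.IsRegularOfDegree 2) : IsAntimagic G := by
  obtain ⟨f, hbij, _, hdist⟩ := main (Fintype.card V) V G le_rfl hreg 0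
  refine ⟨f, ?_, hdist⟩
  rw [two_regular_card_edges G hreg]
  simpa using hbij
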